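/- Let q(p) = Φ⁻¹(1 − p/2). For any α ∈ (0, 1/2) and 0 < Δ < α, there is a universal constant c > 0 such that q(α + Δ) ≥ q(α) − c·Δ/α. -/

import Mathlib

open MeasureTheory Real Set

noncomputable def gphi (x : ℝ) : ℝ := (Real.sqrt (2 * Real.pi))⁻¹ * Real.exp (-x ^ 2 / 2)

lemma gphi_pos (x : ℝ) : 0 < gphi x := by
  have h2π : (0:ℝ) < 2 * Real.pi := by positivity
  exact mul_pos (inv_pos.2 (Real.sqrt_pos.2 h2π)) (Real.exp_pos _)

lemma gphi_eq (x : ℝ) : gphi x = (Real.sqrt (2 * Real.pi))⁻¹ * Real.exp (-(2⁻¹) * x ^ 2) := by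
  unfold gphi; ring_nf

lemma gphi_integrable : Integrable gphi := by
  have := (integrable_exp_neg_mul_sq (b := 2⁻¹) (by norm_num)).const_mul
    (Real.sqrt (2 * Real.pi))⁻¹
  refine this.congr ?_
  filter_upwards with x
  rw [gphi_eq]

lemma gphi_total : ∫ x, gphi x = 1 := by
  have h : ∫ x, gphi x = (Real.sqrt (2 * Real.pi))⁻¹ * ∫ x, Real.exp (-(2⁻¹) * x ^ 2) := by
    rw [← integral_const_mul]
    congr 1; ext x; rw [gphi_eq]
  rw [h, integral_gaussian]
  have : Real.pi / 2⁻¹ = 2 * Real.pi := by ring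
  rw [this, inv_mul_cancel₀]
  exact ne_of_gt (Real.sqrt_pos.2 (by positivity))

lemma gphi_anti {x y : ℝ} (hx : 0 ≤ x) (hxy : x ≤ y) : gphi y ≤ gphi x := by
  unfold gphi
  have : y ^ 2 ≥ x ^ 2 := by nlinarith
  have h2π : (0:ℝ) < (Real.sqrt (2 * Real.pi))⁻¹ := inv_pos.2 (Real.sqrt_pos.2 (by positivity))
  have := Real.exp_le_exp.2 (show -y ^ 2 / 2 ≤ -x ^ 2 / 2 by linarith)
  nlinarith

lemma Phi_mono {s t : ℝ} (h : s ≤ t) : ∫ x in Iic s, gphi x ≤ ∫ x in Iic t, gphi x := by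
  refine setIntegral_mono_set gphi_integrable.integrableOn ?_ ?_
  · filter_upwards with x using (gphi_pos x).le
  · exact Filter.Eventually.of_forall (Iic_subset_Iic.2 h)

lemma Phi_le_one (t : ℝ) : ∫ x in Iic t, gphi x ≤ 1 := by
  rw [← gphi_total]
  exact setIntegral_le_integral gphi_integrable
    (Filter.Eventually.of_forall fun x => (gphi_pos x).le)

lemma Phi_zero : ∫ x in Iic (0:ℝ), gphi x = 1 / 2 := by
  have hsym : ∫ x in Iic (0:ℝ), gphi x = ∫ x in Ioi (0:ℝ), gphi x := by
    have := integral_comp_neg_Iic (0:ℝ) gphi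
    rw [neg_zero] at this
    rw [← this]
    congr 1; ext x; unfold gphi; rw [neg_pow]; ring_nf
  have hadd := intervalIntegral.integral_Iic_add_Ioi (b := (0:ℝ))
    gphi_integrable.integrableOn gphi_integrable.integrableOn
  rw [gphi_total] at hadd
  linarith [hsym, hadd]

lemma Phi_compl (t : ℝ) : 1 - ∫ x in Iic t, gphi x = ∫ x in Ioi t, gphi x := by
  have hadd := intervalIntegral.integral_Iic_add_Ioi (b := t)
    gphi_integrable.integrableOn gphi_integrable.integrableOn
  rw [gphi_total] at hadd
  linarith

lemma gphi_deriv (x : ℝ) :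
    HasDerivAt (fun y => -gphi y) (x * gphi x) x := by
  have h1 : HasDerivAt (fun y : ℝ => -y ^ 2 / 2) (-x) x := by
    have : HasDerivAt (fun y : ℝ => y ^ 2) (2 * x) x := by
      simpa using (hasDerivAt_pow 2 x)
    exact (this.neg.div_const 2).congr_deriv (by ring)
  have h2 := h1.exp
  have h3 := (h2.const_mul (Real.sqrt (2 * Real.pi))⁻¹).neg
  exact h3.congr_deriv (by unfold gphi; ring)

lemma gphi_tail {t : ℝ} (ht : 1 ≤ t) : ∫ x in Ioi t, gphi x ≤ gphi t := by
  have hint : IntegrableOn (fun x => x * gphi x) (Ioi t) := by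
    have : Integrable fun x : ℝ => (Real.sqrt (2 * Real.pi))⁻¹ * (x * Real.exp (-(2⁻¹) * x ^ 2)) :=
      (integrable_mul_exp_neg_mul_sq (b := 2⁻¹) (by norm_num)).const_mul _
    refine (this.congr ?_).integrableOn
    filter_upwards with x
    rw [gphi_eq]; ring
  have hlim : Filter.Tendsto (fun y => -gphi y) Filter.atTop (nhds 0) := by
    have h0 : Filter.Tendsto (fun y : ℝ => y ^ 2) Filter.atTop Filter.atTop :=
      Filter.tendsto_pow_atTop two_ne_zero
    have h1 : Filter.Tendsto (fun y : ℝ => -y ^ 2 / 2) Filter.atTop Filter.atBot := by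
      have := h0.atTop_mul_const_of_neg (show -(2:ℝ)⁻¹ < 0 by norm_num)
      exact this.congr fun y => by ring
    have h2 := (Real.tendsto_exp_atBot.comp h1).const_mul (Real.sqrt (2 * Real.pi))⁻¹
    rw [mul_zero] at h2
    have := h2.neg
    rw [neg_zero] at this
    refine this.congr fun y => ?_
    simp only [Function.comp, gphi]
  have hFTC := MeasureTheory.integral_Ioi_of_hasDerivAt_of_tendsto' (a := t)
    (f := fun y => -gphi y) (f' := fun x => x * gphi x)
    (fun x _ => gphi_deriv x) hint hlim
  have hmono : ∫ x in Ioi t, gphi x ≤ ∫ x in Ioi t, x * gphi x := by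
    refine setIntegral_mono_on gphi_integrable.integrableOn hint measurableSet_Ioi ?_
    intro x hx
    have hx1 : 1 ≤ x := le_trans ht (le_of_lt hx)
    nlinarith [gphi_pos x]
  rw [hFTC] at hmono
  simpa using hmono

lemma gphi_one_le : gphi 1 ≤ 1 / 4 := by
  unfold gphi
  rw [inv_mul_le_iff₀ (Real.sqrt_pos.2 (by positivity))]
  have h1 : Real.exp (-(1:ℝ) ^ 2 / 2) = (Real.exp (2⁻¹))⁻¹ := by
    rw [← Real.exp_neg]; norm_num
  have h2 : Real.exp (2⁻¹) ^ 2 = Real.exp 1 := by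
    rw [← Real.exp_nat_mul]; norm_num
  have h3 : (2.7182818283 : ℝ) < Real.exp 1 := Real.exp_one_gt_d9
  have h4 : (3.141592 : ℝ) < Real.pi := Real.pi_gt_d6
  have h5 : Real.sqrt (2 * Real.pi) ^ 2 = 2 * Real.pi :=
    Real.sq_sqrt (by positivity)
  have h6 : (0:ℝ) < Real.sqrt (2 * Real.pi) := Real.sqrt_pos.2 (by positivity)
  have h7 : (0:ℝ) < Real.exp 2⁻¹ := Real.exp_pos _
  rw [h1]
  rw [inv_le_iff_one_le_mul₀ h7]
  nlinarith [h5, h6, h3, h2, h7]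

/-- For the two-sided standard normal quantile function `q(p) = Φ⁻¹(1 - p/2)`, there is a
universal constant `c > 0` such that for all `α ∈ (0,1/2)` and `0 < Δ < α`,
`q(α + Δ) ≥ q(α) - c·Δ/α`. -/
theorem gaussian_quantile_shift_lower
    (Φ : ℝ → ℝ)
    (hΦ : ∀ t, Φ t = ∫ x in Set.Iic t, (Real.sqrt (2 * Real.pi))⁻¹ * Real.exp (-x ^ 2 / 2))
    (q : ℝ → ℝ)
    (hq : ∀ p ∈ Set.Ioo (0 : ℝ) 1, Φ (q p) = 1 - p / 2) :
    ∃ c > (0 : ℝ), ∀ α Δ : ℝ, α ∈ Set.Ioo (0 : ℝ) (1 / 2) → 0 < Δ → Δ < α →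
      q (α + Δ) ≥ q α - c * Δ / α := by
  have hg1 : 0 < gphi 1 := gphi_pos 1
  have hΦ' : ∀ t, Φ t = ∫ x in Iic t, gphi x := fun t => hΦ t
  refine ⟨(4 * gphi 1)⁻¹, by positivity, ?_⟩
  intro α Δ hα hΔ hΔα
  obtain ⟨hα0, hα2⟩ := hα
  set a := q (α + Δ) with ha_def
  set b := q α with hb_def
  have hmem1 : α ∈ Set.Ioo (0:ℝ) 1 := ⟨hα0, by linarith⟩
  have hmem2 : α + Δ ∈ Set.Ioo (0:ℝ) 1 := ⟨by linarith, by linarith⟩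
  have hb : Φ b = 1 - α / 2 := hq α hmem1
  have ha : Φ a = 1 - (α + Δ) / 2 := hq _ hmem2
  have hab : a < b := by
    by_contra h
    push_neg at h
    have := Phi_mono h
    rw [← hΦ' a, ← hΦ' b] at this
    rw [ha, hb] at this
    linarith
  have ha0 : 0 < a := by
    by_contra h
    push_neg at h
    have := Phi_mono h
    rw [← hΦ' a] at this
    rw [Phi_zero] at this
    rw [ha] at this
    linarith
  have hdiff : Φ b - Φ a = Δ / 2 := by rw [ha, hb]; ring
  have hIoc : Φ b - Φ a = ∫ x in Ioc a b, gphi x := by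
    have h := intervalIntegral.integral_Iic_sub_Iic (f := gphi) (a := a) (b := b) (μ := volume)
      gphi_integrable.integrableOn gphi_integrable.integrableOn
    rw [intervalIntegral.integral_of_le hab.le] at h
    rw [hΦ' a, hΦ' b]
    exact h
  have hconst : (b - a) * gphi b ≤ ∫ x in Ioc a b, gphi x := by
    have h1 : ∫ _x in Ioc a b, gphi b ≤ ∫ x in Ioc a b, gphi x := by
      refine setIntegral_mono_on (integrableOn_const ?_)
        gphi_integrable.integrableOn measurableSet_Ioc ?_
      · rw [Real.volume_Ioc]; exact ENNReal.ofReal_ne_top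
      · intro x hx
        exact gphi_anti (le_trans ha0.le hx.1.le) hx.2
    have h2 : ∫ _x in Ioc a b, gphi b = (b - a) * gphi b := by
      rw [setIntegral_const, Real.volume_real_Ioc, smul_eq_mul,
        max_eq_left (by linarith)]
    linarith
  have hkey : (b - a) * gphi b ≤ Δ / 2 := by rw [hdiff] at hIoc; linarith
  have hgb : 2 * gphi 1 * α ≤ gphi b := by
    rcases le_or_gt 1 b with h1b | h1b
    · have htail := gphi_tail h1b
      have hcompl : 1 - ∫ x in Iic b, gphi x = ∫ x in Ioi b, gphi x := Phi_compl b
      rw [← hΦ' b, hb] at hcompl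
      have h14 := gphi_one_le
      nlinarith
    · have := gphi_anti (le_trans ha0.le hab.le) h1b.le
      nlinarith
  have hfin : (b - a) * (4 * gphi 1 * α) ≤ Δ := by
    have hba : 0 ≤ b - a := by linarith
    nlinarith [mul_le_mul_of_nonneg_left hgb hba]
  have hpos : 0 < 4 * gphi 1 * α := by positivity
  have : b - a ≤ (4 * gphi 1)⁻¹ * Δ / α := by
    rw [inv_mul_eq_div, div_div, le_div_iff₀ hpos]
    linarith
  linarith
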